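/- Let G be a stochastic diffusion model on a finite node set V with |V| = n ≥ 2 whose τ-step influence function I^τ is submodular and which satisfies the variance bound with constant c ≥ 1 for step limit τ. Fix an integer s ≥ 1 and reals 0 < ε < 1, 0 < δ < 1. Construct the median-of-averages oracle m from r·ℓ i.i.d. simulations arranged in r pools of ℓ simulations each, with r ≥ 28·ln((n+1)^s/δ) and ℓ ≥ 4·c·(14s/(ε(1−ε)))². Let T be the set of the first s nodes chosen greedily with respect to m (each chosen node maximizing the oracle value of the current seed set augmented by one node). Then with probability at least 1 − δ, I^τ(T) ≥ (1 − (1 − 1/s)^s)·(1 − ε)·OPT^τ_s. -/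

import Mathlib

set_option maxHeartbeats 2000000
set_option linter.unusedSectionVars false


open Finset

/-- A family of activation functions: for each node `v`, a monotone boolean
function of the current active set. -/
abbrev ActFam (V : Type*) := V → Finset V → Bool

section Core
variable {V : Type*} [Fintype V] [DecidableEq V]

/-- One diffusion step: all active nodes stay active, and an inactive node `v`
becomes active when `φ v` evaluates to `true` on the active set (minus `v`). -/
def dstep (φ : ActFam V) (A : Finset V) : Finset V :=
  A ∪ Finset.univ.filter (fun v => φ v (A.erase v) = true)

/-- `reach φ S t` : the set `ρ^t(φ,S)` of nodes active after `t` diffusion steps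
from seed set `S`. -/
def reach (φ : ActFam V) (S : Finset V) : ℕ → Finset V
  | 0 => S
  | t + 1 => dstep φ (reach φ S t)

/-- τ-step influence `I^τ(S)` of a seed set `S`, under the distribution `p` over
activation-function families and utility `H`. -/
noncomputable def infl (p : ActFam V → ℝ) (H : Finset V → ℝ) (τ : ℕ) (S : Finset V) : ℝ :=
  ∑ φ : ActFam V, p φ * H (reach φ S τ)

/-- Variance of the τ-step reachability value `R^τ(S) = H(ρ^τ(φ,S))`. -/
noncomputable def varReach (p : ActFam V → ℝ) (H : Finset V → ℝ) (τ : ℕ) (S : Finset V) : ℝ :=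
  ∑ φ : ActFam V, p φ * (H (reach φ S τ) - infl p H τ S) ^ 2

/-- Submodularity of a set function. -/
def SubmodularFn (F : Finset V → ℝ) : Prop :=
  ∀ A B : Finset V, A ⊆ B → ∀ x ∉ B, F (insert x B) - F B ≤ F (insert x A) - F A

/-- Monotone nondecreasing set function. -/
def MonotoneFn (F : Finset V → ℝ) : Prop :=
  ∀ A B : Finset V, A ⊆ B → F A ≤ F B

/-- A stochastic diffusion model: a probability distribution over families of
monotone activation functions. -/
structure SDM (V : Type*) [Fintype V] [DecidableEq V] where
  p : ActFam V → ℝ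
  nonneg : ∀ φ, 0 ≤ p φ
  sum_one : ∑ φ : ActFam V, p φ = 1
  mono : ∀ φ, p φ ≠ 0 → ∀ v, Monotone (φ v)

/-- The SDM given by weights `p` is independent: the activation functions of the
nodes are mutually independent, i.e. `p` is a product of per-node distributions. -/
def IndepP (p : ActFam V → ℝ) : Prop :=
  ∃ q : V → (Finset V → Bool) → ℝ,
    (∀ v g, 0 ≤ q v g) ∧ (∀ v, ∑ g : Finset V → Bool, q v g = 1) ∧
    (∀ φ, p φ = ∏ v, q v (φ v))

/-- Influence function of the reduced model with respect to `T`:  the expectation,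
conditioned on no node outside `T` being directly activated by `T`, of the marginal
utility `H(ρ^τ(φ, S ∪ T)) - H(T)`.  (For an independent SDM this coincides with the
influence of the reduced model on node set `V ∖ T` with utility `H'(S) = H(S∪T) - H(T)`.) -/
noncomputable def reducedInfl (p : ActFam V → ℝ) (H : Finset V → ℝ) (T : Finset V)
    (τ : ℕ) (S : Finset V) : ℝ :=
  (∑ φ : ActFam V,
      Set.indicator {ψ : ActFam V | ∀ v ∉ T, ψ v (T.erase v) = false} p φ *
        (H (reach φ (S ∪ T) τ) - H T)) /
  (∑ φ : ActFam V, Set.indicator {ψ : ActFam V | ∀ v ∉ T, ψ v (T.erase v) = false} p φ)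

/-- Submodularity of a set function restricted to subsets of a ground set `U`. -/
def SubmodularOn (U : Finset V) (F : Finset V → ℝ) : Prop :=
  ∀ A B : Finset V, A ⊆ B → B ⊆ U → ∀ x ∈ U, x ∉ B →
    F (insert x B) - F B ≤ F (insert x A) - F A

/-- Strong submodularity: the model is independent, the utility is submodular, and
the influence function of every reduced model (w.r.t. any `T` and any step limit)
is submodular on the reduced ground set `V ∖ T`. -/
def StronglySubmodular (p : ActFam V → ℝ) (H : Finset V → ℝ) : Prop :=
  IndepP p ∧ SubmodularFn H ∧
    ∀ (T : Finset V) (τ : ℕ), SubmodularOn Tᶜ (reducedInfl p H T τ)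

/-- `max_{v ∈ V} I^τ({v})`. -/
noncomputable def maxSingle (p : ActFam V → ℝ) (H : Finset V → ℝ) (τ : ℕ) : ℝ :=
  ⨆ v : V, infl p H τ {v}

/-- `OPT^τ_s`, the maximum influence of a seed set of size at most `s`. -/
noncomputable def OPTs (p : ActFam V → ℝ) (H : Finset V → ℝ) (τ : ℕ) (s : ℕ) : ℝ :=
  sSup {x : ℝ | ∃ S : Finset V, S.card ≤ s ∧ x = infl p H τ S}

/-- The variance bound with constant `c`. -/
def VarBoundC (p : ActFam V → ℝ) (H : Finset V → ℝ) (τ : ℕ) (c : ℝ) : Prop :=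
  ∀ T : Finset V,
    varReach p H τ T ≤ c * infl p H τ T * max (infl p H τ T) (maxSingle p H τ)

end Core

/-- Median of `r` reals: the `⌈r/2⌉`-th smallest value. -/
noncomputable def medianR {r : ℕ} (y : Fin r → ℝ) : ℝ :=
  ((List.ofFn y).mergeSort (fun a b => a ≤ b)).getD ((r + 1) / 2 - 1) 0

/-- Probability of the event `P` under (finitely supported) weights `w`. -/
noncomputable def prOf {α : Type*} [Fintype α] (w : α → ℝ) (P : Set α) : ℝ :=
  ∑ a : α, Set.indicator P w a


section ProbHelpers
variable {β : Type*} [Fintype β] {ι : Type*} [Fintype ι] [DecidableEq ι]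

lemma sum_pi_prod (h : ι → β → ℝ) :
    ∑ f : ι → β, ∏ i, h i (f i) = ∏ i, ∑ x, h i x := (Fintype.prod_sum _).symm

lemma coord1 (p : β → ℝ) (hp : ∑ x, p x = 1) (f : β → ℝ) (j : ι) :
    ∑ η : ι → β, (∏ m, p (η m)) * f (η j) = ∑ x, p x * f x := by
  classical
  have key : ∀ η : ι → β, (∏ m, p (η m)) * f (η j)
      = ∏ m, (p (η m) * (if m = j then f (η m) else 1)) := by
    intro η
    rw [Finset.prod_mul_distrib]
    congr 1
    rw [Finset.prod_ite_eq' Finset.univ j (fun m => f (η m))]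
    simp
  rw [Finset.sum_congr rfl fun η _ => key η,
      sum_pi_prod (fun m x => p x * if m = j then f x else 1)]
  rw [Finset.prod_eq_single j (fun m _ hm => by simp [hm, hp]) (by simp)]
  simp

lemma coord2 (p : β → ℝ) (hp : ∑ x, p x = 1) (f g : β → ℝ) {j k : ι} (hjk : j ≠ k) :
    ∑ η : ι → β, (∏ m, p (η m)) * (f (η j) * g (η k))
      = (∑ x, p x * f x) * (∑ x, p x * g x) := by
  classical
  have hk : k ∈ Finset.univ.erase j := by simp [Ne.symm hjk]
  have key : ∀ η : ι → β, (∏ m, p (η m)) * (f (η j) * g (η k))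
      = ∏ m, (p (η m) * (if m = j then f (η m) else if m = k then g (η m) else 1)) := by
    intro η
    rw [Finset.prod_mul_distrib]
    congr 1
    rw [← Finset.mul_prod_erase Finset.univ _ (Finset.mem_univ j),
        ← Finset.mul_prod_erase _ _ hk]
    rw [Finset.prod_eq_one (fun x hx => by
      simp only [Finset.mem_erase] at hx
      simp [hx.1, hx.2.1])]
    simp [Ne.symm hjk, hjk]
  rw [Finset.sum_congr rfl fun η _ => key η,
      sum_pi_prod (fun m x => p x * if m = j then f x else if m = k then g x else 1)]
  rw [← Finset.mul_prod_erase Finset.univ _ (Finset.mem_univ j),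
      ← Finset.mul_prod_erase _ _ hk]
  rw [Finset.prod_eq_one (fun x hx => by
    simp only [Finset.mem_erase] at hx
    simp [hx.1, hx.2.1, hp])]
  simp [Ne.symm hjk, hjk]

end ProbHelpers

section Pool
variable {β : Type*} [Fintype β]

lemma sum_w_one (p : β → ℝ) (hp : ∑ x, p x = 1) {ℓ : ℕ} :
    ∑ η : Fin ℓ → β, (∏ j, p (η j)) = 1 := by
  have := sum_pi_prod (fun (_ : Fin ℓ) (x : β) => p x)
  simpa [hp] using this

lemma Esq (p : β → ℝ) (hp : ∑ x, p x = 1) {ℓ : ℕ} (A : β → ℝ)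
    (hA : ∑ x, p x * A x = 0) :
    ∑ η : Fin ℓ → β, (∏ j, p (η j)) * (∑ j, A (η j))^2
      = (ℓ:ℝ) * ∑ x, p x * (A x)^2 := by
  classical
  have expand : ∀ η : Fin ℓ → β,
      (∏ j, p (η j)) * (∑ j, A (η j))^2
        = ∑ j, ∑ k, (∏ m, p (η m)) * (A (η j) * A (η k)) := by
    intro η
    rw [sq, Finset.sum_mul_sum, Finset.mul_sum]
    exact Finset.sum_congr rfl fun j _ => by rw [Finset.mul_sum]
  rw [Finset.sum_congr rfl fun η _ => expand η]
  rw [Finset.sum_comm]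
  have inner : ∀ j : Fin ℓ,
      ∑ η : Fin ℓ → β, ∑ k, (∏ m, p (η m)) * (A (η j) * A (η k))
        = ∑ x, p x * (A x)^2 := by
    intro j
    rw [Finset.sum_comm]
    rw [← Finset.add_sum_erase _ _ (Finset.mem_univ j)]
    have diag : ∑ η : Fin ℓ → β, (∏ m, p (η m)) * (A (η j) * A (η j))
        = ∑ x, p x * (A x)^2 := by
      have := coord1 p hp (fun x => A x * A x) j
      simpa [sq] using this
    have off : ∀ k ∈ Finset.univ.erase j,
        ∑ η : Fin ℓ → β, (∏ m, p (η m)) * (A (η j) * A (η k)) = 0 := by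
      intro k hk
      have hjk : j ≠ k := (Finset.ne_of_mem_erase hk).symm
      rw [coord2 p hp A A hjk, hA, zero_mul]
    rw [Finset.sum_eq_zero off, diag, add_zero]
  rw [Finset.sum_congr rfl fun j _ => inner j]
  simp [Finset.sum_const, Finset.card_univ, mul_comm]

lemma pool_cheb (p : β → ℝ) (hp0 : ∀ x, 0 ≤ p x) (hp : ∑ x, p x = 1) {ℓ : ℕ} (hℓ : 1 ≤ ℓ)
    (Y : β → ℝ) (μ : ℝ) (hμ : ∑ x, p x * Y x = μ) (t : ℝ) (ht : 0 ≤ t)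
    (hv : ∑ x, p x * (Y x - μ)^2 ≤ (ℓ:ℝ) * t^2 / 4) :
    prOf (fun η : Fin ℓ → β => ∏ j, p (η j))
      {η : Fin ℓ → β | t < |(1/(ℓ:ℝ)) * (∑ j, Y (η j)) - μ|} ≤ 1/4 := by
  classical
  have hℓR : (0:ℝ) < (ℓ:ℝ) := by exact_mod_cast hℓ
  have hwnn : ∀ η : Fin ℓ → β, 0 ≤ ∏ j, p (η j) :=
    fun η => Finset.prod_nonneg fun j _ => hp0 _
  set X : (Fin ℓ → β) → ℝ := fun η => (1/(ℓ:ℝ)) * (∑ j, Y (η j)) - μ with hX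
  have hcent : ∑ x, p x * (Y x - μ) = 0 := by
    have h1 : ∀ x : β, p x * (Y x - μ) = p x * Y x - p x * μ := fun x => by ring
    rw [Finset.sum_congr rfl fun x _ => h1 x, Finset.sum_sub_distrib,
      ← Finset.sum_mul, hμ, hp]; ring
  have Evar : ∑ η : Fin ℓ → β, (∏ j, p (η j)) * (X η)^2
      = (∑ x, p x * (Y x - μ)^2) / (ℓ:ℝ) := by
    have hXeq : ∀ η : Fin ℓ → β, (X η)^2 = (1/(ℓ:ℝ))^2 * (∑ j, (Y (η j) - μ))^2 := by
      intro η
      have : X η = (1/(ℓ:ℝ)) * (∑ j, (Y (η j) - μ)) := by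
        rw [hX]
        simp only [Finset.sum_sub_distrib, Finset.sum_const, Finset.card_univ,
          Fintype.card_fin, nsmul_eq_mul]
        field_simp
      rw [this, mul_pow]
    calc ∑ η : Fin ℓ → β, (∏ j, p (η j)) * (X η)^2
        = (1/(ℓ:ℝ))^2 * ∑ η : Fin ℓ → β, (∏ j, p (η j)) * (∑ j, (Y (η j) - μ))^2 := by
          rw [Finset.mul_sum]
          exact Finset.sum_congr rfl fun η _ => by rw [hXeq η]; ring
      _ = (1/(ℓ:ℝ))^2 * ((ℓ:ℝ) * ∑ x, p x * (Y x - μ)^2) := by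
          rw [Esq p hp _ hcent]
      _ = (∑ x, p x * (Y x - μ)^2) / (ℓ:ℝ) := by
          field_simp
  by_cases htpos : 0 < t
  · have markov : prOf (fun η : Fin ℓ → β => ∏ j, p (η j))
        {η : Fin ℓ → β | t < |X η|} * t^2
        ≤ ∑ η : Fin ℓ → β, (∏ j, p (η j)) * (X η)^2 := by
      rw [prOf, Finset.sum_mul]
      apply Finset.sum_le_sum
      intro η _
      by_cases hmem : η ∈ {η : Fin ℓ → β | t < |X η|}
      · rw [Set.indicator_of_mem hmem]
        have h1 : t^2 ≤ (X η)^2 := by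
          have hmem' : t < |X η| := hmem
          have := le_of_lt hmem'
          calc t^2 = |t|^2 := by rw [abs_of_nonneg ht]
            _ ≤ |X η|^2 := by
                apply pow_le_pow_left₀ (abs_nonneg t)
                rw [abs_of_nonneg ht]; exact this
            _ = (X η)^2 := sq_abs _
        exact mul_le_mul_of_nonneg_left h1 (hwnn η)
      · rw [Set.indicator_of_notMem hmem, zero_mul]
        exact mul_nonneg (hwnn η) (sq_nonneg _)
    have h2 : (∑ x, p x * (Y x - μ)^2) / (ℓ:ℝ) ≤ t^2/4 := by
      rw [div_le_div_iff₀ hℓR (by norm_num)]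
      calc (∑ x, p x * (Y x - μ)^2) * 4 ≤ ((ℓ:ℝ) * t^2 / 4) * 4 := by linarith
        _ = (ℓ:ℝ) * t^2 := by ring
        _ = t^2 * (ℓ:ℝ) := by ring
    rw [Evar] at markov
    have := le_trans markov h2
    have ht2 : (0:ℝ) < t^2 := by positivity
    nlinarith [this]
  · -- t = 0 case
    have ht0 : t = 0 := le_antisymm (not_lt.mp htpos) ht
    have hv0 : ∑ x, p x * (Y x - μ)^2 ≤ 0 := by
      rw [ht0] at hv; simpa using hv
    have hv0' : (0:ℝ) ≤ ∑ x, p x * (Y x - μ)^2 :=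
      Finset.sum_nonneg fun x _ => mul_nonneg (hp0 x) (sq_nonneg _)
    have hveq : ∑ x, p x * (Y x - μ)^2 = 0 := le_antisymm hv0 hv0'
    have hE0 : ∑ η : Fin ℓ → β, (∏ j, p (η j)) * (X η)^2 = 0 := by
      rw [Evar, hveq, zero_div]
    have hterm : ∀ η : Fin ℓ → β, (∏ j, p (η j)) * (X η)^2 = 0 := by
      intro η
      have := (Finset.sum_eq_zero_iff_of_nonneg
        (fun η _ => mul_nonneg (hwnn η) (sq_nonneg _))).mp hE0
      exact this η (Finset.mem_univ η)
    have : prOf (fun η : Fin ℓ → β => ∏ j, p (η j))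
        {η : Fin ℓ → β | t < |X η|} = 0 := by
      rw [prOf]
      apply Finset.sum_eq_zero
      intro η _
      by_cases hmem : η ∈ {η : Fin ℓ → β | t < |X η|}
      · rw [Set.indicator_of_mem hmem]
        have hx : t < |X η| := hmem
        rw [ht0] at hx
        have hx2 : (X η)^2 ≠ 0 := by
          have : X η ≠ 0 := by
            intro h0; rw [h0] at hx; simp at hx
          positivity
        have := hterm η
        rcases mul_eq_zero.mp this with h | h
        · exact h
        · exact absurd h hx2
      · rw [Set.indicator_of_notMem hmem]
    rw [this]; norm_num

lemma boost {γ : Type*} [Fintype γ] (w : γ → ℝ) (hw0 : ∀ x, 0 ≤ w x) (hw1 : ∑ x, w x = 1)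
    (PB : γ → Prop) [DecidablePred PB] (hq : prOf w {x | PB x} ≤ 1/4) (r : ℕ) :
    prOf (fun ω : Fin r → γ => ∏ i, w (ω i))
      {ω : Fin r → γ | r ≤ 2 * (Finset.univ.filter (fun a => PB (ω a))).card}
      ≤ (97/112)^r := by
  classical
  set g : γ → ℝ := fun x => w x * (if PB x then (49/16:ℝ) else 1) with hg
  have hgnn : ∀ x, 0 ≤ g x := fun x => by
    rw [hg]; dsimp only
    apply mul_nonneg (hw0 x)
    split <;> norm_num
  have hq0 : 0 ≤ prOf w {x | PB x} := by
    apply Finset.sum_nonneg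
    intro x _
    exact Set.indicator_nonneg (fun y _ => hw0 y) x
  have hsum : ∑ x, g x ≤ 97/64 := by
    have heq : ∑ x, g x = 1 + (33/16) * prOf w {x | PB x} := by
      rw [prOf, Finset.mul_sum, ← hw1, ← Finset.sum_add_distrib]
      apply Finset.sum_congr rfl
      intro x _
      by_cases hx : PB x
      · rw [Set.indicator_of_mem (by exact hx : x ∈ {x | PB x})]
        rw [hg]; simp [hx]; ring
      · rw [Set.indicator_of_notMem (by exact hx : x ∉ {x | PB x})]
        rw [hg]; simp [hx]
    rw [heq]; linarith
  have hgs0 : (0:ℝ) ≤ ∑ x, g x := Finset.sum_nonneg fun x _ => hgnn x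
  have hwprod : ∀ ω : Fin r → γ, 0 ≤ ∏ i, w (ω i) :=
    fun ω => Finset.prod_nonneg fun i _ => hw0 _
  have hgprod : ∀ ω : Fin r → γ, 0 ≤ ∏ i, g (ω i) :=
    fun ω => Finset.prod_nonneg fun i _ => hgnn _
  have key : prOf (fun ω : Fin r → γ => ∏ i, w (ω i))
      {ω : Fin r → γ | r ≤ 2 * (Finset.univ.filter (fun a => PB (ω a))).card}
      * (7/4:ℝ)^r ≤ ∑ ω : Fin r → γ, ∏ i, g (ω i) := by
    rw [prOf, Finset.sum_mul]
    apply Finset.sum_le_sum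
    intro ω _
    by_cases hmem : ω ∈ {ω : Fin r → γ | r ≤ 2 * (Finset.univ.filter (fun a => PB (ω a))).card}
    · rw [Set.indicator_of_mem hmem]
      have hN : r ≤ 2 * (Finset.univ.filter (fun a => PB (ω a))).card := hmem
      have hprod : ∏ i, g (ω i)
          = (∏ i, w (ω i)) * (49/16:ℝ)^((Finset.univ.filter (fun a => PB (ω a))).card) := by
        rw [hg]
        rw [Finset.prod_mul_distrib]
        congr 1
        rw [Finset.prod_ite, Finset.prod_const, Finset.prod_const, one_pow, mul_one]
      rw [hprod]
      have hpow : (7/4:ℝ)^r ≤ (49/16:ℝ)^((Finset.univ.filter (fun a => PB (ω a))).card) := by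
        have : (49/16:ℝ) = (7/4)^2 := by norm_num
        rw [this, ← pow_mul]
        apply pow_le_pow_right₀ (by norm_num)
        omega
      calc (∏ i, w (ω i)) * (7/4:ℝ)^r
          ≤ (∏ i, w (ω i)) * (49/16:ℝ)^((Finset.univ.filter (fun a => PB (ω a))).card) :=
            mul_le_mul_of_nonneg_left hpow (hwprod ω)
        _ = _ := rfl
    · rw [Set.indicator_of_notMem hmem, zero_mul]
      exact hgprod ω
  have hprodsum : ∑ ω : Fin r → γ, ∏ i, g (ω i) = (∑ x, g x)^r := by
    rw [sum_pi_prod (fun (_ : Fin r) (x : γ) => g x)]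
    rw [Finset.prod_const, Finset.card_univ, Fintype.card_fin]
  rw [hprodsum] at key
  have hbound : (∑ x, g x)^r ≤ (97/64:ℝ)^r := pow_le_pow_left₀ hgs0 hsum r
  have h74 : (0:ℝ) < (7/4:ℝ)^r := by positivity
  have final : prOf (fun ω : Fin r → γ => ∏ i, w (ω i))
      {ω : Fin r → γ | r ≤ 2 * (Finset.univ.filter (fun a => PB (ω a))).card}
      ≤ (97/64:ℝ)^r / (7/4)^r := by
    rw [le_div_iff₀ h74]
    exact le_trans key hbound
  have heq2 : (97/64:ℝ)^r / (7/4)^r = (97/112:ℝ)^r := by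
    rw [div_eq_iff (ne_of_gt h74), ← mul_pow]
    norm_num
  rw [heq2] at final
  exact final
end Pool



lemma countP_ofFn_eq_card {n : ℕ} (y : Fin n → ℝ) (q : ℝ → Prop) [DecidablePred q] :
    (List.ofFn y).countP (fun x => decide (q x))
      = (Finset.univ.filter (fun a => q (y a))).card := by
  classical
  have h1 : ((List.ofFn y) : Multiset ℝ) = Finset.univ.val.map y :=
    (Fin.univ_val_map y).symm
  have h2 : Multiset.countP q ((List.ofFn y) : Multiset ℝ)
      = (List.ofFn y).countP (fun x => decide (q x)) := Multiset.coe_countP _ _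
  rw [← h2, h1, Multiset.countP_eq_card_filter, Finset.card_def, Finset.filter_val]
  rw [Multiset.filter_map]
  rw [Multiset.card_map]
  exact congrArg Multiset.card (Multiset.filter_congr (fun x _ => Iff.rfl))

lemma median_count {r : ℕ} (hr : 1 ≤ r) (y : Fin r → ℝ) (μ t : ℝ)
    (h : t < |medianR y - μ|) :
    r ≤ 2 * (Finset.univ.filter (fun a => t < |y a - μ|)).card := by
  classical
  set l := (List.ofFn y).mergeSort (fun a b => a ≤ b) with hl
  have hperm : l.Perm (List.ofFn y) := List.mergeSort_perm _ _
  have hlen : l.length = r := by rw [hperm.length_eq, List.length_ofFn]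
  set k₀ := (r + 1) / 2 - 1 with hk₀def
  have hk₀ : k₀ < r := by omega
  have hmed : medianR y = l.get ⟨k₀, hlen ▸ hk₀⟩ := by
    rw [medianR, ← hl, List.getD_eq_getElem _ _ (hlen ▸ hk₀ : k₀ < l.length)]; rfl
  set m := l.get ⟨k₀, hlen ▸ hk₀⟩ with hm
  have hsort : l.Pairwise (· ≤ ·) := List.pairwise_mergeSort' _ _
  have hpair := List.pairwise_iff_get.mp hsort
  have hpair' : ∀ (i j : Fin l.length), (i:ℕ) ≤ (j:ℕ) → l.get i ≤ l.get j := by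
    intro i j hij
    rcases Nat.lt_or_ge (i:ℕ) (j:ℕ) with hlt | hge
    · exact hpair i j hlt
    · have : i = j := Fin.ext (le_antisymm hij hge)
      rw [this]
  -- counts
  have count_ge : r - k₀ ≤ (Finset.univ.filter (fun a => m ≤ y a)).card := by
    rw [← countP_ofFn_eq_card y (fun x => m ≤ x)]
    rw [← hperm.countP_eq]
    rw [List.countP_eq_length_filter]
    have hsplit : l = l.take k₀ ++ l.drop k₀ := (List.take_append_drop _ _).symm
    conv_rhs => rw [hsplit]
    rw [List.filter_append, List.length_append]
    have hdrop : (l.drop k₀).filter (fun x => decide (m ≤ x)) = l.drop k₀ := by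
      rw [List.filter_eq_self]
      intro a ha
      obtain ⟨i, hi⟩ := List.get_of_mem ha
      have : a = l.get ⟨k₀ + i.1, by have := i.2; simp [List.length_drop] at this; omega⟩ := by
        rw [← hi]; simp
      rw [this]
      simp only [decide_eq_true_eq]
      exact hpair' ⟨k₀, hlen ▸ hk₀⟩ ⟨k₀ + i.1, _⟩ (by simp)
    rw [hdrop, List.length_drop, hlen]
    omega
  have count_le : k₀ + 1 ≤ (Finset.univ.filter (fun a => y a ≤ m)).card := by
    rw [← countP_ofFn_eq_card y (fun x => x ≤ m)]
    rw [← hperm.countP_eq]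
    rw [List.countP_eq_length_filter]
    have hsplit : l = l.take (k₀+1) ++ l.drop (k₀+1) := (List.take_append_drop _ _).symm
    conv_rhs => rw [hsplit]
    rw [List.filter_append, List.length_append]
    have htake : (l.take (k₀+1)).filter (fun x => decide (x ≤ m)) = l.take (k₀+1) := by
      rw [List.filter_eq_self]
      intro a ha
      obtain ⟨i, hi⟩ := List.get_of_mem ha
      have hilen : i.1 < l.length := lt_of_lt_of_le i.2 (by rw [List.length_take]; exact min_le_right _ _)
      have hik : i.1 < k₀ + 1 := lt_of_lt_of_le i.2 (by rw [List.length_take]; exact min_le_left _ _)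
      have : a = l.get ⟨i.1, hilen⟩ := by
        rw [← hi]
        simp [List.getElem_take]
      rw [this]
      simp only [decide_eq_true_eq]
      exact hpair' ⟨i.1, hilen⟩ ⟨k₀, hlen ▸ hk₀⟩ (by simp; omega)
    rw [htake, List.length_take, hlen]
    omega
  rw [hmed] at h
  rcases lt_abs.mp h with hpos | hneg
  · -- m - μ > t : those with m ≤ y a satisfy t < y a - μ ≤ |y a - μ|
    have hsub : (Finset.univ.filter (fun a => m ≤ y a))
        ⊆ (Finset.univ.filter (fun a => t < |y a - μ|)) := by
      intro a ha
      simp only [Finset.mem_filter, Finset.mem_univ, true_and] at ha ⊢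
      have : t < y a - μ := lt_of_lt_of_le hpos (by linarith)
      exact lt_of_lt_of_le this (le_abs_self _)
    have := Finset.card_le_card hsub
    omega
  · -- μ - m > t
    have hneg' : t < μ - m := by
      have : -(m - μ) = μ - m := by ring
      rw [this] at hneg; exact hneg
    have hsub : (Finset.univ.filter (fun a => y a ≤ m))
        ⊆ (Finset.univ.filter (fun a => t < |y a - μ|)) := by
      intro a ha
      simp only [Finset.mem_filter, Finset.mem_univ, true_and] at ha ⊢
      have h1 : t < μ - y a := lt_of_lt_of_le hneg' (by linarith)
      have : t < -(y a - μ) := by linarith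
      exact lt_of_lt_of_le this (neg_le_abs _)
    have := Finset.card_le_card hsub
    omega

section SDMLemmas
variable {V : Type*} [Fintype V] [DecidableEq V]

lemma reach_mono {φ : ActFam V} (hφ : ∀ v, Monotone (φ v)) {A B : Finset V}
    (h : A ⊆ B) (t : ℕ) : reach φ A t ⊆ reach φ B t := by
  induction t with
  | zero => exact h
  | succ t ih =>
      show dstep φ (reach φ A t) ⊆ dstep φ (reach φ B t)
      apply Finset.union_subset_union ih
      intro v hv
      rw [Finset.mem_filter] at hv ⊢
      refine ⟨hv.1, ?_⟩
      have hle := hφ v (Finset.erase_subset_erase v ih)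
      have h2 := hv.2
      revert hle h2
      cases φ v ((reach φ A t).erase v) <;> cases φ v ((reach φ B t).erase v) <;> simp

lemma infl_nonneg (p : ActFam V → ℝ) (hp : ∀ φ, 0 ≤ p φ) (H : Finset V → ℝ)
    (hH : ∀ S, 0 ≤ H S) (τ : ℕ) (S : Finset V) : 0 ≤ infl p H τ S :=
  Finset.sum_nonneg fun φ _ => mul_nonneg (hp φ) (hH _)

lemma infl_mono (G : SDM V) (H : Finset V → ℝ) (hH : MonotoneFn H) (τ : ℕ) :
    MonotoneFn (infl G.p H τ) := by
  intro A B hAB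
  apply Finset.sum_le_sum
  intro φ _
  by_cases hp : G.p φ = 0
  · rw [hp, zero_mul, zero_mul]
  · exact mul_le_mul_of_nonneg_left (hH _ _ (reach_mono (G.mono φ hp) hAB τ)) (G.nonneg φ)

lemma opt_spec (p : ActFam V → ℝ) (H : Finset V → ℝ) (τ : ℕ) (s : ℕ) :
    ∃ Sstar : Finset V, Sstar.card ≤ s ∧ infl p H τ Sstar = OPTs p H τ s ∧
      ∀ S : Finset V, S.card ≤ s → infl p H τ S ≤ OPTs p H τ s := by
  classical
  set F := (Finset.univ.powerset.filter (fun S : Finset V => S.card ≤ s)).image (infl p H τ)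
    with hF
  have hFne : F.Nonempty := by
    refine ⟨infl p H τ ∅, ?_⟩
    rw [hF]
    apply Finset.mem_image_of_mem
    simp
  have hset : {x : ℝ | ∃ S : Finset V, S.card ≤ s ∧ x = infl p H τ S} = ↑F := by
    ext x
    simp only [Set.mem_setOf_eq, hF, Finset.coe_image, Set.mem_image, Finset.mem_coe,
      Finset.mem_filter, Finset.mem_powerset]
    constructor
    · rintro ⟨S, hS, rfl⟩; exact ⟨S, ⟨Finset.subset_univ S, hS⟩, rfl⟩
    · rintro ⟨S, ⟨_, hS⟩, rfl⟩; exact ⟨S, hS, rfl⟩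
  have hOPT : OPTs p H τ s = F.max' hFne := by
    rw [OPTs, hset, Finset.Nonempty.csSup_eq_max']
  obtain ⟨Sstar, hSmem, hSeq⟩ := Finset.mem_image.mp (F.max'_mem hFne)
  refine ⟨Sstar, (Finset.mem_filter.mp hSmem).2, by rw [hOPT, hSeq], ?_⟩
  intro S hS
  rw [hOPT]
  apply Finset.le_max'
  rw [hF]
  apply Finset.mem_image_of_mem
  simp [hS]

lemma submod_union (F : Finset V → ℝ) (hsub : SubmodularFn F) (A B : Finset V) :
    F (A ∪ B) - F A ≤ ∑ x ∈ B \ A, (F (insert x A) - F A) := by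
  classical
  induction B using Finset.induction_on with
  | empty => simp
  | @insert b B hb ih =>
      by_cases hbA : b ∈ A
      · have h1 : A ∪ insert b B = A ∪ B := by
          rw [Finset.union_insert, Finset.insert_eq_self.mpr (Finset.mem_union_left B hbA)]
        have h2 : insert b B \ A = B \ A := by
          rw [Finset.insert_sdiff_of_mem _ hbA]
        rw [h1, h2]
        exact ih
      · by_cases hbB : b ∈ A ∪ B
        · have hbB' : b ∈ B := by
            rcases Finset.mem_union.mp hbB with h | h
            · exact absurd h hbA
            · exact h
          exact absurd hbB' hb
        · have h1 : A ∪ insert b B = insert b (A ∪ B) := by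
            rw [Finset.union_insert]
          have h2 : insert b B \ A = insert b (B \ A) := by
            rw [Finset.insert_sdiff_of_notMem _ hbA]
          have h3 : b ∉ B \ A := fun hc => hb (Finset.mem_sdiff.mp hc).1
          rw [h1, h2, Finset.sum_insert h3]
          have h4 : F (insert b (A ∪ B)) - F (A ∪ B) ≤ F (insert b A) - F A :=
            hsub A (A ∪ B) Finset.subset_union_left b hbB
          linarith
end SDMLemmas

lemma card_small_sets {V : Type*} [Fintype V] [DecidableEq V] (s : ℕ) :
    ((Finset.univ.powerset.filter (fun S : Finset V => S.card ≤ s)).card : ℝ)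
      ≤ ((Fintype.card V : ℝ) + 1) ^ s := by
  classical
  set 𝒯 := Finset.univ.powerset.filter (fun S : Finset V => S.card ≤ s) with h𝒯
  letI : LinearOrder V :=
    LinearOrder.lift' (fun v => (Fintype.equivFin V v : ℕ))
      (fun a b hab => (Fintype.equivFin V).injective (Fin.ext hab))
  set f : Finset V → (Fin s → Option V) :=
    fun S => (fun i => (S.sort (· ≤ ·))[(i:ℕ)]?) with hf
  have hinj : Set.InjOn f ↑𝒯 := by
    intro S₁ hS₁ S₂ hS₂ hfeq
    have hc₁ : S₁.card ≤ s := (Finset.mem_filter.mp hS₁).2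
    have hc₂ : S₂.card ≤ s := (Finset.mem_filter.mp hS₂).2
    have hlist : S₁.sort (· ≤ ·) = S₂.sort (· ≤ ·) := by
      apply List.ext_getElem?
      intro n
      by_cases hn : n < s
      · exact congrFun hfeq ⟨n, hn⟩
      · rw [List.getElem?_eq_none_iff.mpr, List.getElem?_eq_none_iff.mpr]
        · rw [Finset.length_sort]; omega
        · rw [Finset.length_sort]; omega
    have := congrArg List.toFinset hlist
    rwa [Finset.sort_toFinset, Finset.sort_toFinset] at this
  have hcard : 𝒯.card ≤ Fintype.card (Fin s → Option V) := by
    rw [← Finset.card_univ]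
    apply Finset.card_le_card_of_injOn f (fun x _ => Finset.mem_univ _) hinj
  have : Fintype.card (Fin s → Option V) = (Fintype.card V + 1) ^ s := by
    rw [Fintype.card_fun, Fintype.card_option, Fintype.card_fin]
  rw [this] at hcard
  calc (𝒯.card : ℝ) ≤ (((Fintype.card V + 1) ^ s : ℕ) : ℝ) := by exact_mod_cast hcard
    _ = ((Fintype.card V : ℝ) + 1) ^ s := by push_cast; ring
/-- **Greedy maximization over the median-of-averages oracle.**  For an SDM with
submodular influence function satisfying the variance bound with constant `c ≥ 1`,
with `r ≥ 28·ln((n+1)ˢ/δ)` pools of `ℓ ≥ 4·c·(14s/(ε(1−ε)))²` simulations each,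
the set of the first `s` greedily chosen nodes (w.r.t. the oracle) has influence
at least `(1−(1−1/s)ˢ)·(1−ε)·OPT^τ_s` with probability at least `1 − δ`. -/
theorem greedy_median_of_averages {V : Type*} [Fintype V] [DecidableEq V]
    (G : SDM V) (H : Finset V → ℝ)
    (hH0 : H ∅ = 0) (hHnn : ∀ S, 0 ≤ H S) (hHmono : MonotoneFn H)
    (hn : 2 ≤ Fintype.card V)
    (τ : ℕ) (hsub : SubmodularFn (infl G.p H τ))
    (c : ℝ) (hc : 1 ≤ c) (hvar : VarBoundC G.p H τ c)
    (s : ℕ) (hs : 1 ≤ s)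
    (ε δ : ℝ) (hε0 : 0 < ε) (hε1 : ε < 1) (hδ0 : 0 < δ) (hδ1 : δ < 1)
    (r ℓ : ℕ)
    (hr : (r : ℝ) ≥ 28 * Real.log (((Fintype.card V : ℝ) + 1) ^ s / δ))
    (hℓ : (ℓ : ℝ) ≥ 4 * c * (14 * s / (ε * (1 - ε))) ^ 2)
    (seq : (Fin r → Fin ℓ → ActFam V) → Fin s → V)
    (hgreedy : ∀ ω, ∀ i : Fin s,
      seq ω i ∉ (Finset.Iio i).image (seq ω) ∧
      ∀ u : V, u ∉ (Finset.Iio i).image (seq ω) →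
        medianR (fun a => (1 / (ℓ : ℝ)) *
            ∑ j, H (reach (ω a j) (insert u ((Finset.Iio i).image (seq ω))) τ)) ≤
          medianR (fun a => (1 / (ℓ : ℝ)) *
            ∑ j, H (reach (ω a j) (insert (seq ω i) ((Finset.Iio i).image (seq ω))) τ))) :
    prOf (fun ω : Fin r → Fin ℓ → ActFam V => ∏ i, ∏ j, G.p (ω i j))
      {ω | (1 - (1 - 1 / (s : ℝ)) ^ s) * (1 - ε) * OPTs G.p H τ s ≤
        infl G.p H τ (Finset.univ.image (seq ω))} ≥ 1 - δ := by
  classical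
  rw [ge_iff_le]
  have hV : Nonempty V := by
    have : 0 < Fintype.card V := by omega
    exact Fintype.card_pos_iff.mp this
  set n := Fintype.card V with hn'
  set I : Finset V → ℝ := infl G.p H τ with hIdef
  set M : ℝ := maxSingle G.p H τ with hMdef
  set OPT : ℝ := OPTs G.p H τ s with hOPTdef
  set w : (Fin r → Fin ℓ → ActFam V) → ℝ := fun ω => ∏ i, ∏ j, G.p (ω i j) with hw
  have hw0 : ∀ ω, 0 ≤ w ω := fun ω =>
    Finset.prod_nonneg fun i _ => Finset.prod_nonneg fun j _ => G.nonneg _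
  have hwsum : ∑ ω, w ω = 1 := by
    have h1 : ∑ η : Fin ℓ → ActFam V, ∏ j, G.p (η j) = 1 := sum_w_one G.p G.sum_one
    exact sum_w_one (fun η : Fin ℓ → ActFam V => ∏ j, G.p (η j)) h1
  have hsR : (1:ℝ) ≤ (s:ℝ) := by exact_mod_cast hs
  have hsR0 : (0:ℝ) < (s:ℝ) := by linarith
  have h1ε : 0 < 1 - ε := by linarith
  have hc0 : (0:ℝ) < c := lt_of_lt_of_le one_pos hc
  set θ : ℝ := ε * (1 - ε) / (14 * s) with hθdef
  have hθpos : 0 < θ := div_pos (mul_pos hε0 h1ε) (by positivity)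
  obtain ⟨Sstar, hScard, hSeq0, hub0⟩ := opt_spec G.p H τ s
  have hSeq : I Sstar = OPT := hSeq0
  have hub : ∀ S : Finset V, S.card ≤ s → I S ≤ OPT := hub0
  have hImono : MonotoneFn I := infl_mono G H hHmono τ
  have hInn : ∀ S, 0 ≤ I S := fun S => infl_nonneg G.p G.nonneg H hHnn τ S
  have hOPT0 : 0 ≤ OPT := le_trans (hInn ∅) (hub ∅ (by simp))
  have hMle : M ≤ OPT := by
    rw [hMdef, maxSingle]
    exact ciSup_le fun v => hub {v} (by simp [hs])
  set α : ℝ := θ * OPT with hαdef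
  have hα0 : 0 ≤ α := mul_nonneg hθpos.le hOPT0
  set tS : Finset V → ℝ := fun S => θ * max (I S) M with htSdef
  have htSα : ∀ S : Finset V, S.card ≤ s → tS S ≤ α := fun S hS =>
    mul_le_mul_of_nonneg_left (max_le (hub S hS) hMle) hθpos.le
  have htS0 : ∀ S, 0 ≤ tS S := fun S =>
    mul_nonneg hθpos.le (le_trans (hInn S) (le_max_left _ _))
  -- basic numeric facts
  have hn3 : (3:ℝ) ≤ (n:ℝ) + 1 := by
    have : (2:ℝ) ≤ (n:ℝ) := by exact_mod_cast hn
    linarith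
  have hA1 : (1:ℝ) < ((n:ℝ)+1)^s := by
    calc (1:ℝ) < 3 := by norm_num
      _ ≤ ((n:ℝ)+1) := hn3
      _ = ((n:ℝ)+1)^1 := (pow_one _).symm
      _ ≤ ((n:ℝ)+1)^s := pow_le_pow_right₀ (by linarith) hs
  have hApos : (0:ℝ) < ((n:ℝ)+1)^s := by linarith
  have hlog : 0 < Real.log (((n:ℝ)+1)^s / δ) := by
    apply Real.log_pos
    rw [lt_div_iff₀ hδ0]
    nlinarith
  have hr1 : 1 ≤ r := by
    have hrpos : (0:ℝ) < (r:ℝ) := lt_of_lt_of_le (by linarith) hr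
    exact_mod_cast Nat.one_le_cast.mpr (by exact_mod_cast Nat.cast_pos.mp hrpos)
  have hθinv : 14 * (s:ℝ) / (ε * (1 - ε)) = 1/θ := by
    rw [hθdef]; field_simp
  have hℓbound : 4*c/θ^2 ≤ (ℓ:ℝ) := by
    have he : 4 * c * (14 * (s:ℝ) / (ε * (1 - ε)))^2 = 4*c/θ^2 := by
      rw [hθinv]
      field_simp
    rw [← he]
    exact hℓ
  have hl1 : 1 ≤ ℓ := by
    have hpos : (0:ℝ) < 4*c/θ^2 := by positivity
    have : (0:ℝ) < (ℓ:ℝ) := lt_of_lt_of_le hpos hℓbound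
    exact_mod_cast Nat.one_le_cast.mpr (by exact_mod_cast Nat.cast_pos.mp this)
  -- events
  set 𝒯 := Finset.univ.powerset.filter (fun S : Finset V => S.card ≤ s) with h𝒯
  set Bev : Finset V → Set (Fin r → Fin ℓ → ActFam V) := fun S =>
    {ω | tS S < |medianR (fun a => (1 / (ℓ : ℝ)) * ∑ j, H (reach (ω a j) S τ)) - I S|}
    with hBev
  set Gd : Set (Fin r → Fin ℓ → ActFam V) := {ω | ∀ S ∈ 𝒯, ω ∉ Bev S} with hGd
  -- STEP 1 : per-set probability bound
  have perset : ∀ S : Finset V, S.card ≤ s → prOf w (Bev S) ≤ (97/112:ℝ)^r := by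
    intro S hS
    have hμ : ∑ φ : ActFam V, G.p φ * H (reach φ S τ) = I S := rfl
    have hvS : ∑ φ : ActFam V, G.p φ * (H (reach φ S τ) - I S)^2
        ≤ (ℓ:ℝ) * (tS S)^2 / 4 := by
      have h1 : ∑ φ : ActFam V, G.p φ * (H (reach φ S τ) - I S)^2
          = varReach G.p H τ S := rfl
      have h2 := hvar S
      have hmax0 : 0 ≤ max (I S) M := le_trans (hInn S) (le_max_left _ _)
      have h3 : c * I S * max (I S) M ≤ c * (max (I S) M)^2 := by
        have h4 := le_max_left (I S) M
        have h4' := mul_le_mul_of_nonneg_right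
          (mul_le_mul_of_nonneg_left h4 hc0.le) hmax0
        have e : c * (max (I S) M) * (max (I S) M) = c * (max (I S) M)^2 := by ring
        linarith
      have h5 : (tS S)^2 = θ^2 * (max (I S) M)^2 := by
        rw [htSdef]; ring
      have h6 : c * (max (I S) M)^2 ≤ (ℓ:ℝ) * (tS S)^2/4 := by
        rw [h5]
        have e1 : c * (max (I S) M)^2 = (4*c/θ^2) * (θ^2*(max (I S) M)^2)/4 := by
          field_simp
        rw [e1]
        have := mul_le_mul_of_nonneg_right hℓbound
          (show (0:ℝ) ≤ θ^2*(max (I S) M)^2 by positivity)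
        linarith
      rw [h1]
      exact le_trans h2 (le_trans h3 h6)
    have hPB := pool_cheb G.p G.nonneg G.sum_one hl1 (fun φ => H (reach φ S τ))
      (I S) hμ (tS S) (htS0 S) hvS
    have hboost := boost (fun η : Fin ℓ → ActFam V => ∏ j, G.p (η j))
      (fun η => Finset.prod_nonneg fun j _ => G.nonneg _)
      (sum_w_one G.p G.sum_one)
      (fun η : Fin ℓ → ActFam V =>
        tS S < |(1/(ℓ:ℝ)) * (∑ j, H (reach (η j) S τ)) - I S|) hPB r
    refine le_trans (Finset.sum_le_sum fun ω _ => ?_) hboost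
    apply Set.indicator_le_indicator_of_subset
    · intro ω hω
      rw [hBev] at hω
      simp only [Set.mem_setOf_eq] at hω ⊢
      exact median_count hr1
        (fun a => (1/(ℓ:ℝ)) * ∑ j, H (reach (ω a j) S τ)) (I S) (tS S) hω
    · exact hw0
  -- STEP 2 : numeric tail bound
  have hstepexp : Real.exp (-(r:ℝ)/28) ≤ δ / ((n:ℝ)+1)^s := by
    rw [← Real.exp_log (div_pos hδ0 hApos)]
    apply Real.exp_le_exp.mpr
    rw [Real.log_div (ne_of_gt hδ0) (ne_of_gt hApos)]
    have hlogdiv : Real.log (((n:ℝ)+1)^s / δ)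
        = Real.log (((n:ℝ)+1)^s) - Real.log δ :=
      Real.log_div (ne_of_gt hApos) (ne_of_gt hδ0)
    rw [hlogdiv] at hr
    linarith
  have hpow : (97/112:ℝ)^r ≤ Real.exp (-(r:ℝ)/28) := by
    have h1 : (97/112:ℝ) ≤ Real.exp (-(1/28)) := by
      have h2 := Real.add_one_le_exp (-(1/28:ℝ))
      have h3 : (97/112:ℝ) ≤ 27/28 := by norm_num
      linarith
    calc (97/112:ℝ)^r ≤ (Real.exp (-(1/28)))^r := pow_le_pow_left₀ (by norm_num) h1 r
      _ = Real.exp (-(r:ℝ)/28) := by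
          rw [← Real.exp_nat_mul]
          congr 1
          ring
  have hδbound : ∑ S ∈ 𝒯, prOf w (Bev S) ≤ δ := by
    have h1 : ∀ S ∈ 𝒯, prOf w (Bev S) ≤ (97/112:ℝ)^r := fun S hSm =>
      perset S (Finset.mem_filter.mp hSm).2
    calc ∑ S ∈ 𝒯, prOf w (Bev S) ≤ ∑ _S ∈ 𝒯, (97/112:ℝ)^r := Finset.sum_le_sum h1
      _ = (𝒯.card:ℝ) * (97/112:ℝ)^r := by rw [Finset.sum_const, nsmul_eq_mul]
      _ ≤ ((n:ℝ)+1)^s * (δ/((n:ℝ)+1)^s) := by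
          apply mul_le_mul (card_small_sets s) (le_trans hpow hstepexp)
            (by positivity) (le_of_lt hApos)
      _ = δ := by field_simp
  -- STEP 3 : union bound
  have hunion : 1 - ∑ S ∈ 𝒯, prOf w (Bev S) ≤ prOf w Gd := by
    have hpt : ∀ ω, w ω - ∑ S ∈ 𝒯, Set.indicator (Bev S) w ω
        ≤ Set.indicator Gd w ω := by
      intro ω
      by_cases hω : ω ∈ Gd
      · rw [Set.indicator_of_mem hω]
        have : 0 ≤ ∑ S ∈ 𝒯, Set.indicator (Bev S) w ω :=
          Finset.sum_nonneg fun S _ => Set.indicator_nonneg (fun x _ => hw0 x) ω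
        linarith
      · rw [Set.indicator_of_notMem hω]
        rw [hGd] at hω
        simp only [Set.mem_setOf_eq, not_forall] at hω
        obtain ⟨S₀, hS₀mem, hS₀⟩ := hω
        have hS₀' : ω ∈ Bev S₀ := by
          by_contra hcon
          exact hS₀ hcon
        have h1 : w ω ≤ ∑ S ∈ 𝒯, Set.indicator (Bev S) w ω := by
          calc w ω = Set.indicator (Bev S₀) w ω := (Set.indicator_of_mem hS₀' w).symm
            _ ≤ ∑ S ∈ 𝒯, Set.indicator (Bev S) w ω :=
              Finset.single_le_sum
                (fun S _ => Set.indicator_nonneg (fun x _ => hw0 x) ω) hS₀mem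
        linarith
    calc 1 - ∑ S ∈ 𝒯, prOf w (Bev S)
        = ∑ ω, (w ω - ∑ S ∈ 𝒯, Set.indicator (Bev S) w ω) := by
          rw [Finset.sum_sub_distrib, hwsum]
          congr 1
          rw [Finset.sum_comm]
          rfl
      _ ≤ ∑ ω, Set.indicator Gd w ω := Finset.sum_le_sum fun ω _ => hpt ω
      _ = prOf w Gd := rfl
  -- STEP 4 : deterministic greedy analysis
  have determ : ∀ ω ∈ Gd,
      (1 - (1 - 1/(s:ℝ))^s) * (1-ε) * OPT ≤ I (Finset.univ.image (seq ω)) := by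
    intro ω hω
    have hacc : ∀ S : Finset V, S.card ≤ s →
        |medianR (fun a => (1/(ℓ:ℝ)) * ∑ j, H (reach (ω a j) S τ)) - I S| ≤ tS S := by
      intro S hS
      have hmem : S ∈ 𝒯 := by rw [h𝒯]; simp [hS]
      have hnot := hω S hmem
      rw [hBev] at hnot
      simp only [Set.mem_setOf_eq] at hnot
      exact le_of_not_gt hnot
    set σ := seq ω with hσ
    set P : ℕ → Finset V := fun k => (Finset.univ.filter (fun j : Fin s => (j:ℕ) < k)).image σ
      with hP
    have hP0 : P 0 = ∅ := by rw [hP]; simp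
    have hPIio : ∀ k, ∀ hk : k < s, (Finset.Iio (⟨k, hk⟩ : Fin s)).image σ = P k := by
      intro k hk
      rw [hP]
      congr 1
      ext j
      simp [Fin.lt_def]
    have hPsucc : ∀ k, ∀ hk : k < s, P (k+1) = insert (σ ⟨k, hk⟩) (P k) := by
      intro k hk
      show (Finset.univ.filter (fun j : Fin s => (j:ℕ) < k+1)).image σ
        = insert (σ ⟨k,hk⟩) ((Finset.univ.filter (fun j : Fin s => (j:ℕ) < k)).image σ)
      have hfil : (Finset.univ.filter (fun j : Fin s => (j:ℕ) < k+1))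
          = insert (⟨k,hk⟩ : Fin s) (Finset.univ.filter (fun j : Fin s => (j:ℕ) < k)) := by
        ext j
        simp only [Finset.mem_filter, Finset.mem_univ, true_and, Finset.mem_insert]
        constructor
        · intro hj
          rcases Nat.lt_succ_iff_lt_or_eq.mp hj with h | h
          · exact Or.inr h
          · exact Or.inl (Fin.ext h)
        · intro hj
          rcases hj with h | h
          · subst h; simp
          · omega
      rw [hfil, Finset.image_insert]
    have hPs : P s = Finset.univ.image σ := by
      show (Finset.univ.filter (fun j : Fin s => (j:ℕ) < s)).image σ = Finset.univ.image σ
      congr 1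
      apply Finset.filter_true_of_mem
      intro j _
      exact j.2
    have hPcard : ∀ k, (P k).card ≤ k := by
      intro k
      induction k with
      | zero => rw [hP0]; simp
      | succ k ih =>
          by_cases hk : k < s
          · rw [hPsucc k hk]
            exact le_trans (Finset.card_insert_le _ _) (by omega)
          · have hPeq : P (k+1) = P k := by
              show (Finset.univ.filter (fun j : Fin s => (j:ℕ) < k+1)).image σ
                = (Finset.univ.filter (fun j : Fin s => (j:ℕ) < k)).image σ
              congr 1
              ext j
              simp only [Finset.mem_filter, Finset.mem_univ, true_and]
              have := j.2
              omega
            rw [hPeq]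
            omega
    have hq0 : (0:ℝ) ≤ 1 - 1/(s:ℝ) := by
      have : 1/(s:ℝ) ≤ 1 := by
        rw [div_le_one hsR0]; exact hsR
      linarith
    have hqlt : 1 - 1/(s:ℝ) < 1 := by
      have : 0 < 1/(s:ℝ) := by positivity
      linarith
    have key : ∀ k, k ≤ s → OPT - I (P k) ≤ (1 - 1/(s:ℝ))^k * OPT
        + 2*α * (∑ j ∈ Finset.range k, (1 - 1/(s:ℝ))^j) := by
      intro k
      induction k with
      | zero =>
          intro _
          rw [hP0]
          simp
          linarith [hInn ∅]
      | succ k ih =>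
          intro hk1
          have hk : k < s := by omega
          have ihk := ih (by omega)
          obtain ⟨hvnot, hbest⟩ := hgreedy ω ⟨k, hk⟩
          rw [hPIio k hk] at hvnot hbest
          set v := σ ⟨k, hk⟩ with hv
          have hstepu : ∃ u, u ∉ P k ∧
              I (P k) + (OPT - I (P k))/(s:ℝ) ≤ I (insert u (P k)) := by
            by_cases hcase : OPT ≤ I (P k)
            · refine ⟨v, hvnot, ?_⟩
              have h1 : I (P k) ≤ I (insert v (P k)) :=
                hImono _ _ (Finset.subset_insert _ _)
              have h2 : (OPT - I (P k))/(s:ℝ) ≤ 0 :=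
                div_nonpos_of_nonpos_of_nonneg (by linarith) hsR0.le
              linarith
            · push_neg at hcase
              have h1 : OPT ≤ I (P k ∪ Sstar) := by
                calc OPT = I Sstar := hSeq.symm
                  _ ≤ I (P k ∪ Sstar) := hImono _ _ Finset.subset_union_right
              have h2 := submod_union I hsub (P k) Sstar
              have hDne : (Sstar \ P k).Nonempty := by
                rw [Finset.sdiff_nonempty]
                intro hsubset
                have := hImono Sstar (P k) hsubset
                rw [hSeq] at this
                linarith
              have hDcard : ((Sstar \ P k).card : ℝ) ≤ (s:ℝ) := by
                exact_mod_cast le_trans (Finset.card_le_card Finset.sdiff_subset) hScard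
              by_contra hno
              push_neg at hno
              have hsumlt : ∑ x ∈ Sstar \ P k, (I (insert x (P k)) - I (P k))
                  < ∑ _x ∈ Sstar \ P k, (OPT - I (P k))/(s:ℝ) := by
                apply Finset.sum_lt_sum_of_nonempty hDne
                intro x hx
                have hxnot : x ∉ P k := (Finset.mem_sdiff.mp hx).2
                have := hno x hxnot
                linarith
              rw [Finset.sum_const, nsmul_eq_mul] at hsumlt
              have hfrac : 0 < (OPT - I (P k))/(s:ℝ) := div_pos (by linarith) hsR0
              have hcc : ((Sstar \ P k).card:ℝ) * ((OPT - I (P k))/(s:ℝ))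
                  ≤ (s:ℝ) * ((OPT - I (P k))/(s:ℝ)) :=
                mul_le_mul_of_nonneg_right hDcard hfrac.le
              have hcanc : (s:ℝ) * ((OPT - I (P k))/(s:ℝ)) = OPT - I (P k) := by
                field_simp
              linarith
          obtain ⟨u, hu, hustep⟩ := hstepu
          have hcard_ins : ∀ x : V, (insert x (P k)).card ≤ s := fun x =>
            le_trans (Finset.card_insert_le _ _) (by have := hPcard k; omega)
          have haccv := hacc (insert v (P k)) (hcard_ins v)
          have haccu := hacc (insert u (P k)) (hcard_ins u)
          have htv := htSα _ (hcard_ins v)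
          have htu := htSα _ (hcard_ins u)
          have hbu := hbest u hu
          rw [abs_le] at haccv haccu
          have hPk1 : P (k+1) = insert v (P k) := hPsucc k hk
          have hIstep : I (P k) + (OPT - I (P k))/(s:ℝ) - 2*α ≤ I (P (k+1)) := by
            rw [hPk1]
            have c1 := haccv.1
            have c2 := haccv.2
            have c3 := haccu.1
            have c4 := haccu.2
            linarith
          have hrec : OPT - I (P (k+1)) ≤ (1 - 1/(s:ℝ)) * (OPT - I (P k)) + 2*α := by
            have hexp : (1 - 1/(s:ℝ)) * (OPT - I (P k))
                = OPT - I (P k) - (OPT - I (P k))/(s:ℝ) := by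
              field_simp
            linarith
          calc OPT - I (P (k+1)) ≤ (1 - 1/(s:ℝ)) * (OPT - I (P k)) + 2*α := hrec
            _ ≤ (1 - 1/(s:ℝ)) * ((1 - 1/(s:ℝ))^k * OPT
                + 2*α * (∑ j ∈ Finset.range k, (1 - 1/(s:ℝ))^j)) + 2*α := by
                have := mul_le_mul_of_nonneg_left ihk hq0
                linarith
            _ = (1 - 1/(s:ℝ))^(k+1) * OPT
                + 2*α * (∑ j ∈ Finset.range (k+1), (1 - 1/(s:ℝ))^j) := by
                rw [geom_sum_succ]
                ring
    have hfin := key s (le_refl s)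
    rw [hPs] at hfin
    have hqne : (1 - 1/(s:ℝ)) ≠ 1 := by
      intro hcon
      have : 1/(s:ℝ) = 0 := by linarith
      have : (0:ℝ) < 1/(s:ℝ) := by positivity
      linarith
    have hgeom : ∑ j ∈ Finset.range s, (1 - 1/(s:ℝ))^j
        = (s:ℝ) * (1 - (1 - 1/(s:ℝ))^s) := by
      rw [geom_sum_eq hqne]
      have hd : (1 - 1/(s:ℝ)) - 1 = -(1/(s:ℝ)) := by ring
      rw [hd]
      rw [div_neg]
      field_simp
      ring
    rw [hgeom] at hfin
    have hB0 : 0 ≤ 1 - (1 - 1/(s:ℝ))^s := by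
      have : (1 - 1/(s:ℝ))^s ≤ 1 := pow_le_one₀ hq0 (by linarith)
      linarith
    have h2θs : 2*θ*(s:ℝ) = ε*(1-ε)/7 := by
      rw [hθdef]
      field_simp
      ring
    set B := 1 - (1 - 1/(s:ℝ))^s with hB
    have hqs : (1 - 1/(s:ℝ))^s = 1 - B := by rw [hB]; ring
    rw [hqs] at hfin
    have hεε : ε*(1-ε)/7 ≤ ε := by nlinarith
    have e1 : 2*α*((s:ℝ)*B) = B*OPT*(2*θ*(s:ℝ)) := by
      rw [hαdef]; ring
    rw [h2θs] at e1
    have hBOPT : 0 ≤ B*OPT := mul_nonneg hB0 hOPT0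
    have h7 : B*OPT*(ε*(1-ε)/7) ≤ B*OPT*ε := mul_le_mul_of_nonneg_left hεε hBOPT
    have e2 : B*(1-ε)*OPT = B*OPT - B*OPT*ε := by ring
    have e3 : (1-B)*OPT = OPT - B*OPT := by ring
    clear_value B α θ OPT I
    linarith [hfin, e1, h7, e2, e3]
  -- STEP 5 : conclusion
  have htarget : prOf w Gd ≤ prOf w
      {ω | (1 - (1 - 1/(s:ℝ))^s) * (1-ε) * OPT ≤ I (Finset.univ.image (seq ω))} := by
    apply Finset.sum_le_sum
    intro ω _
    apply Set.indicator_le_indicator_of_subset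
    · intro ω' hω'
      exact determ ω' hω'
    · exact hw0
  calc 1 - δ ≤ 1 - ∑ S ∈ 𝒯, prOf w (Bev S) := by linarith
    _ ≤ prOf w Gd := hunion
    _ ≤ _ := htarget
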